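/- arXiv:2508.08486 — 2 statements merged into one kernel-verified Lean document; each statement's English description precedes it below -/
import Mathlib

section
/- There is no function f from ordinal preference datasets and feasible sets to models that always outputs a most preferred model: formally, if two preference relations ≿¹ and ≿² over models agree on all pairwise prompt-level comparisons (hence generate identical ordinal datasets) but rank two models π¹, π² oppositely (π¹ ≻¹ π² and π² ≻² π¹), then any f applied to the common dataset and feasible set {π¹, π²} fails to select the optimal model for at least one of ≿¹, ≿². -/
/-- A distribution over responses: nonnegative weights summing to 1. -/
def IsDist {Y : Type*} [Fintype Y] (p : Y → ℝ) : Prop :=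
  (∀ y, 0 ≤ p y) ∧ ∑ y, p y = 1

/-- A model maps prompts to distributions over responses. -/
def IsModel {X Y : Type*} [Fintype Y] (π : X → Y → ℝ) : Prop :=
  ∀ x, IsDist (π x)

/-- No algorithm `f` consuming only the ordinal dataset (which is a function of the
prompt-level comparisons) can always output a most preferred feasible model:
if `pref₁` and `pref₂` induce the same prompt-level comparisons (hence the same
ordinal dataset) but rank `π₁, π₂` oppositely, `f` fails for at least one of them. -/
theorem stmt_0 {X Y : Type*} [Fintype Y] {Dataset : Type*}
    -- the ordinal dataset is determined by the prompt-level comparisons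
    (mkDataset : (X → Y → Y → Prop) → Dataset)
    -- two preference relations over models
    (pref₁ pref₂ : (X → Y → ℝ) → (X → Y → ℝ) → Prop)
    -- their induced prompt-level comparisons
    (promptPref₁ promptPref₂ : X → Y → Y → Prop)
    (hagree : promptPref₁ = promptPref₂)
    -- two feasible models ranked oppositely by the two preferences
    (π₁ π₂ : X → Y → ℝ) (hm₁ : IsModel π₁) (hm₂ : IsModel π₂)
    (hstrict₁ : pref₁ π₁ π₂ ∧ ¬ pref₁ π₂ π₁)
    (hstrict₂ : pref₂ π₂ π₁ ∧ ¬ pref₂ π₁ π₂)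
    -- any fine-tuning algorithm mapping (dataset, feasible set) to a feasible model
    (f : Dataset → Set (X → Y → ℝ) → (X → Y → ℝ))
    (hfeas : f (mkDataset promptPref₁) {π₁, π₂} ∈ ({π₁, π₂} : Set (X → Y → ℝ))) :
    ¬ ((∀ π ∈ ({π₁, π₂} : Set (X → Y → ℝ)), pref₁ (f (mkDataset promptPref₁) {π₁, π₂}) π) ∧
       (∀ π ∈ ({π₁, π₂} : Set (X → Y → ℝ)), pref₂ (f (mkDataset promptPref₂) {π₁, π₂}) π)) := by
  rintro ⟨h1, h2⟩
  rw [← hagree] at h2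
  rcases hfeas with h | h
  · exact hstrict₂.2 (h ▸ h2 π₂ (Or.inr rfl))
  · exact hstrict₁.2 (h ▸ h1 π₁ (Or.inl rfl))
end

section
/- Suppose a dataset of cardinal labels covers all pairs: for every x ∈ X and y, y' ∈ Y it contains the label w(x,y,y') = r_true(x,y') − r_true(x,y). If r̂ achieves zero squared-error loss on this dataset, then for any finite feasible set F of models, every maximizer of Σ_{x,y} π(y|x) r̂(x,y) over F is also a maximizer of Σ_{x,y} π(y|x) r_true(x,y) over F. -/
/-- Expected utility of a model under reward `r`. -/
def expUtility {X Y : Type*} [Fintype X] [Fintype Y] (r : X → Y → ℝ) (π : X → Y → ℝ) : ℝ :=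
  ∑ x, ∑ y, π x y * r x y

/-- If the dataset covers all pairs with labels `w(x,y,y') = r_true(x,y') − r_true(x,y)`
and `r̂` achieves zero squared-error loss (i.e. matches all labels), then over any finite
feasible set of models, any maximizer of expected utility under `r̂` also maximizes
expected utility under `r_true`. -/
theorem stmt_11 {X Y : Type*} [Fintype X] [Fintype Y] [Nonempty X] [Nonempty Y]
    (rtrue rhat : X → Y → ℝ) (w : X → Y → Y → ℝ)
    (hw : ∀ x y y', w x y y' = rtrue x y' - rtrue x y)
    (hfit : ∀ x y y', rhat x y' - rhat x y = w x y y')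
    (F : Finset (X → Y → ℝ))
    (hmodels : ∀ π ∈ F, (∀ x y, 0 ≤ π x y) ∧ ∀ x, ∑ y, π x y = 1)
    (πstar : X → Y → ℝ) (hπstar : πstar ∈ F)
    (hmax : ∀ π ∈ F, expUtility rhat π ≤ expUtility rhat πstar) :
    ∀ π ∈ F, expUtility rtrue π ≤ expUtility rtrue πstar := by
  obtain ⟨y0⟩ := ‹Nonempty Y›
  set c : X → ℝ := fun x => rhat x y0 - rtrue x y0 with hc
  have hrhat : ∀ x y, rhat x y = rtrue x y + c x := by
    intro x y
    have h := hfit x y0 y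
    rw [hw] at h
    simp only [hc]
    linarith
  have key : ∀ π ∈ F, expUtility rhat π = expUtility rtrue π + ∑ x, c x := by
    intro π hπ
    obtain ⟨-, hsum⟩ := hmodels π hπ
    unfold expUtility
    rw [← Finset.sum_add_distrib]
    apply Finset.sum_congr rfl
    intro x _
    have : ∑ y, π x y * rhat x y = ∑ y, (π x y * rtrue x y + π x y * c x) := by
      apply Finset.sum_congr rfl
      intro y _
      rw [hrhat x y]; ring
    rw [this, Finset.sum_add_distrib, ← Finset.sum_mul, hsum x, one_mul]
  intro π hπ
  have h1 := hmax π hπ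
  rw [key π hπ, key πstar hπstar] at h1
  linarith
end
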